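/- Almost quantum distributions satisfy Local Orthogonality: if P is an n-partite almost quantum distribution and E is a set of pairwise locally orthogonal events (events e = (ā|x̄) on subsets of parties, where e ⊥ e' iff there is a common party k with x_k = x_k' and a_k ≠ a_k'), then Σ_{e∈E} P(e) ≤ 1. -/

import Mathlib

variable {n : ℕ} {A X : Type*}

/-- Apply a list of (party, outcome, input) projectors to a vector, in order. -/
def applyList {H : Type*} [AddCommMonoid H] [Module ℂ H]
    (E : Fin n → A → X → (H →ₗ[ℂ] H)) (L : List (Fin n × A × X)) (v : H) : H :=
  L.foldr (fun t w => E t.1 t.2.1 t.2.2 w) v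

/-- The list of (party, outcome, input) triples of an event, where an event assigns to
each party that measures an (outcome, input) pair, and `none` to parties that do not
measure. -/
def evList (e : Fin n → Option (A × X)) : List (Fin n × A × X) :=
  (List.finRange n).filterMap fun k => (e k).map fun p => (k, p.1, p.2)

/-- Two events are locally orthogonal iff some common measuring party uses the same input
but obtains different outcomes. -/
def LocOrth (e e' : Fin n → Option (A × X)) : Prop :=
  ∃ k a a' x, e k = some (a, x) ∧ e' k = some (a', x) ∧ a ≠ a'

lemma applyList_cons {H : Type*} [AddCommMonoid H] [Module ℂ H]
    (E : Fin n → A → X → (H →ₗ[ℂ] H)) (t : Fin n × A × X) (L : List (Fin n × A × X)) (v : H) :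
    applyList E (t :: L) v = E t.1 t.2.1 t.2.2 (applyList E L v) := rfl

lemma applyList_cons' {H : Type*} [AddCommMonoid H] [Module ℂ H]
    (E : Fin n → A → X → (H →ₗ[ℂ] H)) (k : Fin n) (a : A) (x : X)
    (L : List (Fin n × A × X)) (v : H) :
    applyList E ((k, a, x) :: L) v = E k a x (applyList E L v) := rfl

lemma mem_evList {e : Fin n → Option (A × X)} {k : Fin n} {a : A} {x : X}
    (h : e k = some (a, x)) : (k, a, x) ∈ evList e := by
  simp only [evList, List.mem_filterMap]
  exact ⟨k, List.mem_finRange k, by simp [h]⟩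

lemma evList_fst_nodup (e : Fin n → Option (A × X)) :
    ((evList e).map Prod.fst).Nodup := by
  rw [evList, List.map_filterMap]
  apply List.Nodup.filterMap ?_ (List.nodup_finRange n)
  intro a a' b hb hb'
  simp only [Option.map_map] at hb hb'
  rcases Option.map_eq_some_iff.1 hb with ⟨p, _, rfl⟩
  rcases Option.map_eq_some_iff.1 hb' with ⟨q, _, h⟩
  exact h.symm

/-- almost quantum distributions satisfy Local Orthogonality.  Given an
almost quantum representation (`φ`, `E`) — with the permutation-invariance property stated
for arbitrary products of projectors of distinct parties applied to `φ` — and any finite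
family of pairwise locally orthogonal events, the sum of the event probabilities
`P(e) = ⟨φ|∏_{k∈e} E_k^{a_k,x_k}|φ⟩` is at most 1. -/
theorem almostQuantum_satisfies_localOrthogonality
    [Fintype A] {H : Type*} [NormedAddCommGroup H] [InnerProductSpace ℂ H]
    (φ : H) (hφ : ‖φ‖ = 1)
    (E : Fin n → A → X → (H →ₗ[ℂ] H))
    (hidem : ∀ k a x, E k a x ∘ₗ E k a x = E k a x)
    (horth : ∀ k a a' x, a ≠ a' → E k a x ∘ₗ E k a' x = 0)
    (hsa : ∀ k a x (v w : H), (inner ℂ ((E k a x) v) w : ℂ) = inner ℂ v ((E k a x) w))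
    (hcomplete : ∀ k x, ∑ a, E k a x = (LinearMap.id : H →ₗ[ℂ] H))
    (hperm : ∀ L L' : List (Fin n × A × X), L.Perm L' → (L.map Prod.fst).Nodup →
      applyList E L φ = applyList E L' φ)
    {m : ℕ} (ev : Fin m → (Fin n → Option (A × X)))
    (hLO : ∀ i j, i ≠ j → LocOrth (ev i) (ev j)) :
    ∑ i, ((inner ℂ φ (applyList E (evList (ev i)) φ) : ℂ)).re ≤ 1 := by
  classical
  set v : Fin m → H := fun i => applyList E (evList (ev i)) φ with hv
  -- absorption: a projector occurring in L fixes applyList E L φ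
  have habs : ∀ (L : List (Fin n × A × X)) (t : Fin n × A × X), t ∈ L →
      (L.map Prod.fst).Nodup →
      E t.1 t.2.1 t.2.2 (applyList E L φ) = applyList E L φ := by
    intro L t ht hnd
    have hp := hperm _ _ (List.perm_cons_erase ht) hnd
    rw [hp, applyList_cons, ← LinearMap.comp_apply, hidem]
  -- peeling: ⟨applyList L' φ, applyList L φ⟩ = ⟨φ, applyList L φ⟩ when L' ⊆ L
  have hpeel : ∀ (L' L : List (Fin n × A × X)), (∀ t ∈ L', t ∈ L) →
      (L.map Prod.fst).Nodup →
      (inner ℂ (applyList E L' φ) (applyList E L φ) : ℂ) = inner ℂ φ (applyList E L φ) := by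
    intro L' L hsub hnd
    induction L' with
    | nil => rfl
    | cons t L' ih =>
      rw [applyList_cons, hsa, habs L t (hsub t (List.mem_cons_self (a := t) (l := L'))) hnd]
      exact ih fun s hs => hsub s (List.mem_cons_of_mem t hs)
  have hnorm : ∀ i, (inner ℂ φ (v i) : ℂ) = inner ℂ (v i) (v i) :=
    fun i => (hpeel _ _ (fun t ht => ht) (evList_fst_nodup (ev i))).symm
  have horthv : ∀ i j, i ≠ j → (inner ℂ (v i) (v j) : ℂ) = 0 := by
    intro i j hij
    obtain ⟨k, a, a', x, h1, h2, hne⟩ := hLO i j hij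
    have e1 := hperm _ _ (List.perm_cons_erase (mem_evList h1)) (evList_fst_nodup (ev i))
    have e2 := hperm _ _ (List.perm_cons_erase (mem_evList h2)) (evList_fst_nodup (ev j))
    simp only [hv]
    rw [e1, e2, applyList_cons', applyList_cons', hsa, ← LinearMap.comp_apply,
      horth k a a' x hne]
    simp
  set S : H := ∑ i, v i with hS
  have hinnerS : (inner ℂ φ S : ℂ) = ∑ i, inner ℂ φ (v i) := by rw [hS, inner_sum]
  have hSS : (inner ℂ S S : ℂ) = ∑ i, inner ℂ (v i) (v i) := by
    rw [hS, sum_inner]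
    refine Finset.sum_congr rfl fun i _ => ?_
    rw [inner_sum, Finset.sum_eq_single i
      (fun b _ hb => horthv i b (Ne.symm hb))
      (fun h => absurd (Finset.mem_univ i) h)]
  have key : (inner ℂ φ S : ℂ) = inner ℂ S S := by
    rw [hinnerS, hSS]
    exact Finset.sum_congr rfl fun i _ => hnorm i
  have hre : (inner ℂ φ S : ℂ).re = ‖S‖ ^ 2 := by
    rw [key]
    simpa using inner_self_eq_norm_sq (𝕜 := ℂ) S
  have hcs : (inner ℂ φ S : ℂ).re ≤ ‖S‖ := by
    calc (inner ℂ φ S : ℂ).re ≤ ‖(inner ℂ φ S : ℂ)‖ := Complex.re_le_norm _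
    _ ≤ ‖φ‖ * ‖S‖ := norm_inner_le_norm φ S
    _ = ‖S‖ := by rw [hφ, one_mul]
  have hS1 : ‖S‖ ^ 2 ≤ 1 := by nlinarith [norm_nonneg S, hre]
  calc ∑ i, ((inner ℂ φ (v i) : ℂ)).re = (inner ℂ φ S : ℂ).re := by
        rw [hinnerS, Complex.re_sum]
  _ = ‖S‖ ^ 2 := hre
  _ ≤ 1 := hS1
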